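/- Callebaut inequality for weighted geometric means (lower part): for positive definite matrices A_1,...,A_m, B_1,...,B_m and s ∈ [0,1], one has ∑_{j=1}^m (A_j ♯ B_j) ≤ (∑_{j=1}^m A_j ♯_s B_j) ♯ (∑_{j=1}^m A_j ♯_(1-s) B_j) in the Loewner order. -/

import Mathlib

open Matrix Finset
open scoped ComplexOrder

/-- Real power of a matrix via the spectral decomposition (junk value if not Hermitian). -/
noncomputable def mrpow {l : Type*} [Fintype l] [DecidableEq l] (A : Matrix l l ℂ) (r : ℝ) :
    Matrix l l ℂ :=
  if hA : A.IsHermitian then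
    (hA.eigenvectorUnitary : Matrix l l ℂ) *
      Matrix.diagonal (fun i => ((hA.eigenvalues i ^ r : ℝ) : ℂ)) *
      (star hA.eigenvectorUnitary : Matrix l l ℂ)
  else A

/-- Weighted matrix geometric mean `A ♯ₜ B = A^(1/2) (A^(-1/2) B A^(-1/2))^t A^(1/2)`. -/
noncomputable def wgmean {l : Type*} [Fintype l] [DecidableEq l] (A B : Matrix l l ℂ) (t : ℝ) :
    Matrix l l ℂ :=
  mrpow A (1/2) * mrpow (mrpow A (-(1/2)) * B * mrpow A (-(1/2))) t * mrpow A (1/2)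

/-- Loewner order: `A ≤ B` iff `B - A` is positive semidefinite. -/
def loewnerLE {l : Type*} [Fintype l] [DecidableEq l] (A B : Matrix l l ℂ) : Prop :=
  (B - A).PosSemidef

set_option linter.unusedSectionVars false
set_option linter.unusedVariables false

section Helpers

variable {l : Type*} [Fintype l] [DecidableEq l]

private lemma diag_herm (f : l → ℝ) :
    (Matrix.diagonal (fun i => ((f i : ℝ) : ℂ))).IsHermitian :=
  isHermitian_diagonal_of_self_adjoint _ (by ext i; simp [Complex.conj_ofReal])

lemma mrpow_isHermitian {A : Matrix l l ℂ} (hA : A.IsHermitian) (r : ℝ) :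
    (mrpow A r).IsHermitian := by
  rw [mrpow, dif_pos hA, star_eq_conjTranspose]
  exact Matrix.isHermitian_mul_mul_conjTranspose _ (diag_herm _)

private lemma unitary_conj_mul {U D D' : Matrix l l ℂ} (hU : star U * U = 1) :
    (U * D * star U) * (U * D' * star U) = U * (D * D') * star U := by
  have h2 : ∀ X : Matrix l l ℂ, star U * (U * X) = X := fun X => by
    rw [← mul_assoc, hU, one_mul]
  simp only [mul_assoc, h2]

lemma mrpow_mul {A : Matrix l l ℂ} (hA : A.PosDef) (r r' : ℝ) :
    mrpow A r * mrpow A r' = mrpow A (r + r') := by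
  rw [mrpow, mrpow, mrpow, dif_pos hA.1, dif_pos hA.1, dif_pos hA.1,
    unitary_conj_mul (Matrix.mem_unitaryGroup_iff'.mp hA.1.eigenvectorUnitary.2),
    diagonal_mul_diagonal]
  have h3 : (fun i => ((hA.1.eigenvalues i ^ r : ℝ) : ℂ) * ((hA.1.eigenvalues i ^ r' : ℝ) : ℂ))
      = fun i => ((hA.1.eigenvalues i ^ (r + r') : ℝ) : ℂ) := by
    funext i
    rw [← Complex.ofReal_mul, ← Real.rpow_add (hA.eigenvalues_pos i)]
  rw [h3]

lemma mrpow_one {A : Matrix l l ℂ} (hA : A.IsHermitian) : mrpow A 1 = A := by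
  rw [mrpow, dif_pos hA]
  simp only [Real.rpow_one]
  exact hA.spectral_theorem.symm

lemma mrpow_zero {A : Matrix l l ℂ} (hA : A.IsHermitian) : mrpow A 0 = 1 := by
  rw [mrpow, dif_pos hA]
  have hU : (hA.eigenvectorUnitary : Matrix l l ℂ) *
      (star hA.eigenvectorUnitary : Matrix l l ℂ) = 1 :=
    Matrix.mem_unitaryGroup_iff.mp hA.eigenvectorUnitary.2
  simp [Real.rpow_zero, hU]

lemma dot_split (M K : Matrix l l ℂ) (x y : l → ℂ) :
    star x ⬝ᵥ ((Mᴴ * K) *ᵥ y) = star (M *ᵥ x) ⬝ᵥ (K *ᵥ y) := by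
  rw [← Matrix.mulVec_mulVec, Matrix.dotProduct_mulVec, ← Matrix.star_mulVec]

lemma posDef_conj {N E : Matrix l l ℂ} (hN : N.PosDef) (hE : IsUnit E) :
    (Eᴴ * N * E).PosDef := by
  refine Matrix.PosDef.of_dotProduct_mulVec_pos (Matrix.isHermitian_conjTranspose_mul_mul _ hN.1) fun x hx => ?_
  have hinj := Matrix.mulVec_injective_iff_isUnit.mpr hE
  have hx' : E *ᵥ x ≠ 0 := fun h => hx (hinj (by simpa using h))
  have : star x ⬝ᵥ ((Eᴴ * N * E) *ᵥ x) = star (E *ᵥ x) ⬝ᵥ (N *ᵥ (E *ᵥ x)) := by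
    rw [mul_assoc, dot_split, Matrix.mulVec_mulVec]
  rw [this]
  exact hN.dotProduct_mulVec_pos hx'

lemma mrpow_posDef {A : Matrix l l ℂ} (hA : A.PosDef) (r : ℝ) : (mrpow A r).PosDef := by
  rw [mrpow, dif_pos hA.1]
  have hD : (Matrix.diagonal (fun i => ((hA.1.eigenvalues i ^ r : ℝ) : ℂ))).PosDef :=
    Matrix.PosDef.diagonal fun i => by
      exact_mod_cast Complex.zero_lt_real.mpr (Real.rpow_pos_of_pos (hA.eigenvalues_pos i) r)
  have hU : IsUnit (star hA.1.eigenvectorUnitary : Matrix l l ℂ) := by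
    apply Matrix.isUnit_iff_isUnit_det _ |>.mpr
    have := Matrix.mem_unitaryGroup_iff'.mp hA.1.eigenvectorUnitary.2
    have hdet : ((hA.1.eigenvectorUnitary : Matrix l l ℂ).det) *
        ((star hA.1.eigenvectorUnitary : Matrix l l ℂ).det) = 1 := by
      rw [← Matrix.det_mul, Matrix.mem_unitaryGroup_iff.mp hA.1.eigenvectorUnitary.2,
        Matrix.det_one]
    exact IsUnit.of_mul_eq_one _ (by rwa [mul_comm] at hdet)
  have := posDef_conj hD hU
  rwa [star_eq_conjTranspose, conjTranspose_conjTranspose] at this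

lemma mrpow_posSemidef {A : Matrix l l ℂ} (hA : A.PosSemidef) (r : ℝ) :
    (mrpow A r).PosSemidef := by
  rw [mrpow, dif_pos hA.1, star_eq_conjTranspose]
  refine Matrix.PosSemidef.mul_mul_conjTranspose_same ?_ _
  exact Matrix.PosSemidef.diagonal fun i => Complex.zero_le_real.mpr
    (Real.rpow_nonneg (hA.eigenvalues_nonneg i) r)

lemma herm_conj {X Y : Matrix l l ℂ} (hX : X.IsHermitian) (hY : Y.IsHermitian) :
    (X * Y * X).IsHermitian := by
  have := Matrix.isHermitian_conjTranspose_mul_mul X hY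
  rwa [hX.eq] at this

lemma inner_posDef {A B : Matrix l l ℂ} (hA : A.PosDef) (hB : B.PosDef) :
    (mrpow A (-(1/2)) * B * mrpow A (-(1/2))).PosDef := by
  have hR := mrpow_posDef hA (-(1/2))
  have := posDef_conj hB hR.isUnit
  rwa [hR.1.eq] at this

lemma wgmean_posDef {A B : Matrix l l ℂ} (hA : A.PosDef) (hB : B.PosDef) (t : ℝ) :
    (wgmean A B t).PosDef := by
  have hX := mrpow_posDef hA (1/2)
  have := posDef_conj (mrpow_posDef (inner_posDef hA hB) t) hX.isUnit
  rwa [hX.1.eq] at this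

lemma wgmean_isHermitian {A B : Matrix l l ℂ} (hA : A.PosDef) (hB : B.PosDef) (t : ℝ) :
    (wgmean A B t).IsHermitian :=
  (wgmean_posDef hA hB t).1

lemma mrpow_inv {A : Matrix l l ℂ} (hA : A.PosDef) (r : ℝ) :
    (mrpow A r)⁻¹ = mrpow A (-r) :=
  Matrix.inv_eq_left_inv (by
    rw [mrpow_mul hA, show -r + r = 0 by ring, mrpow_zero hA.1])

lemma dot_split' {M : Matrix l l ℂ} (hM : M.IsHermitian) (K : Matrix l l ℂ) (x y : l → ℂ) :
    star x ⬝ᵥ ((M * K) *ᵥ y) = star (M *ᵥ x) ⬝ᵥ (K *ᵥ y) := by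
  conv_lhs => rw [← hM.eq]
  exact dot_split M K x y

private lemma sandwich {X R M N K : Matrix l l ℂ} (hXR : X * R = 1) (hRX : R * X = 1) :
    (X * M * X) * (R * N * R) * (X * K * X) = X * (M * (N * K)) * X := by
  have h1 : ∀ Z : Matrix l l ℂ, X * (R * Z) = Z := fun Z => by rw [← mul_assoc, hXR, one_mul]
  have h2 : ∀ Z : Matrix l l ℂ, R * (X * Z) = Z := fun Z => by rw [← mul_assoc, hRX, one_mul]
  simp only [mul_assoc, h1, h2]

lemma XR_one {A : Matrix l l ℂ} (hA : A.PosDef) :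
    mrpow A (1/2) * mrpow A (-(1/2)) = 1 := by
  rw [mrpow_mul hA, show (1/2 : ℝ) + -(1/2) = 0 by ring, mrpow_zero hA.1]

lemma RX_one {A : Matrix l l ℂ} (hA : A.PosDef) :
    mrpow A (-(1/2)) * mrpow A (1/2) = 1 := by
  rw [mrpow_mul hA, show -(1/2 : ℝ) + 1/2 = 0 by ring, mrpow_zero hA.1]

lemma wg_inv {A B : Matrix l l ℂ} (hA : A.PosDef) (hB : B.PosDef) (s : ℝ) :
    (wgmean A B s)⁻¹ = mrpow A (-(1/2))
      * mrpow (mrpow A (-(1/2)) * B * mrpow A (-(1/2))) (-s) * mrpow A (-(1/2)) := by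
  rw [show wgmean A B s = mrpow A (1/2)
      * mrpow (mrpow A (-(1/2)) * B * mrpow A (-(1/2))) s * mrpow A (1/2) from rfl,
    Matrix.mul_inv_rev, Matrix.mul_inv_rev, mrpow_inv hA,
    mrpow_inv (inner_posDef hA hB), ← mul_assoc]

lemma wg_schur_zero {A B : Matrix l l ℂ} (hA : A.PosDef) (hB : B.PosDef) (s : ℝ) :
    wgmean A B (1/2) * (wgmean A B s)⁻¹ * wgmean A B (1/2) = wgmean A B (1 - s) := by
  have hC := inner_posDef hA hB
  rw [wg_inv hA hB s, show ∀ t : ℝ, wgmean A B t = mrpow A (1/2)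
      * mrpow (mrpow A (-(1/2)) * B * mrpow A (-(1/2))) t * mrpow A (1/2) from fun _ => rfl,
    sandwich (XR_one hA) (RX_one hA), mrpow_mul hC, mrpow_mul hC,
    show -s + 1/2 = 1/2 - s by ring, show (1/2 : ℝ) + (1/2 - s) = 1 - s by ring]
  rfl

lemma blocks_psd_j {A B : Matrix l l ℂ} (hA : A.PosDef) (hB : B.PosDef) (s : ℝ) :
    (fromBlocks (wgmean A B s) (wgmean A B (1/2))
      (wgmean A B (1/2)) (wgmean A B (1-s))).PosSemidef := by
  have hP := wgmean_posDef hA hB s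
  have hG := wgmean_isHermitian hA hB (1/2)
  haveI := hP.isUnit.invertible
  have h0 : (wgmean A B (1-s) - (wgmean A B (1/2))ᴴ * (wgmean A B s)⁻¹
      * wgmean A B (1/2)).PosSemidef := by
    rw [hG.eq, wg_schur_zero hA hB s, sub_self]
    exact Matrix.PosSemidef.zero
  have := (Matrix.PosDef.fromBlocks₁₁ (wgmean A B (1/2)) (wgmean A B (1-s)) hP).mpr h0
  rwa [hG.eq] at this

lemma sum_fromBlocks {m : ℕ} (P G G' Q : Fin m → Matrix l l ℂ) :
    ∑ j, fromBlocks (P j) (G j) (G' j) (Q j)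
      = fromBlocks (∑ j, P j) (∑ j, G j) (∑ j, G' j) (∑ j, Q j) := by
  ext (i | i) (j | j) <;> simp [Matrix.sum_apply]

lemma posSemidef_sum {m : ℕ} {k : Type*} [Fintype k] [DecidableEq k]
    (f : Fin m → Matrix k k ℂ) (h : ∀ j, (f j).PosSemidef) :
    (∑ j, f j).PosSemidef :=
  Finset.sum_induction f _ (fun _ _ ha hb => ha.add hb) Matrix.PosSemidef.zero
    (fun j _ => h j)

lemma sqrt_dominates {M H : Matrix l l ℂ} (hM : M.PosDef) (hH : H.IsHermitian)
    (hle : (M - H * H).PosSemidef) : (mrpow M (1/2) - H).PosSemidef := by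
  set S := mrpow M (1/2) with hSdef
  have hS : S.PosDef := mrpow_posDef hM _
  have hSS : S * S = M := by
    rw [hSdef, mrpow_mul hM, show (1/2 : ℝ) + 1/2 = 1 by norm_num, mrpow_one hM.1]
  have hT : (S - H).IsHermitian := hS.1.sub hH
  apply hT.posSemidef_iff_eigenvalues_nonneg.mpr
  intro i
  show 0 ≤ hT.eigenvalues i
  by_contra hneg
  push_neg at hneg
  set μ := hT.eigenvalues i with hμ
  set v : l → ℂ := ⇑(hT.eigenvectorBasis i) with hv
  have hv0 : v ≠ 0 := by
    have h1 := hT.eigenvectorBasis.orthonormal.ne_zero i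
    intro h
    exact h1 (by ext j; exact congrFun h j)
  have hTv : (S - H) *ᵥ v = μ • v := hT.mulVec_eigenvectorBasis i
  set c := star v ⬝ᵥ (S *ᵥ v) with hc'
  have hcpos : 0 < c := hS.dotProduct_mulVec_pos hv0
  set n := star v ⬝ᵥ v with hn'
  have hnpos : 0 < n := Matrix.dotProduct_star_self_pos_iff.mpr hv0
  have hvH : H *ᵥ v = S *ᵥ v - μ • v := by
    rw [show H = S - (S - H) from (sub_sub_cancel S H).symm, Matrix.sub_mulVec, hTv]
  have hq := hle.dotProduct_mulVec_nonneg v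
  have hid : M - H * H = S * (S - H) + (S - H) * H := by rw [← hSS]; noncomm_ring
  rw [hid, Matrix.add_mulVec, dotProduct_add, ← Matrix.mulVec_mulVec, hTv,
    Matrix.mulVec_smul, dotProduct_smul, dot_split' hT, hTv, star_smul, smul_dotProduct,
    hvH, dotProduct_sub, dotProduct_smul] at hq
  have hμneg : (μ : ℂ) < 0 := by exact_mod_cast hneg
  have ht1 : (μ : ℂ) * c < 0 := mul_neg_of_neg_of_pos hμneg hcpos
  have ht2 : (μ : ℂ) * n < 0 := mul_neg_of_neg_of_pos hμneg hnpos
  rw [← hc', ← hn'] at hq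
  simp only [star_trivial, Complex.real_smul] at hq
  have ht3 : (0 : ℂ) < c - (μ:ℂ) * n := sub_pos.mpr (lt_trans ht2 hcpos)
  have ht4 : (μ:ℂ) * (c - (μ:ℂ) * n) < 0 := mul_neg_of_neg_of_pos hμneg ht3
  have htot : (μ:ℂ) * c + (μ:ℂ) * (c - (μ:ℂ) * n) < 0 := by
    simpa using add_lt_add ht1 ht4
  exact absurd (lt_of_le_of_lt hq htot) (lt_irrefl 0)

set_option maxHeartbeats 2000000 in
lemma key_step {P G Q : Matrix l l ℂ} (hP : P.PosDef) (hQ : Q.PosDef) (hG : G.IsHermitian)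
    (hblock : (fromBlocks P G G Q).PosSemidef) : (wgmean P Q (1/2) - G).PosSemidef := by
  haveI := hP.isUnit.invertible
  have hschur : (Q - G * P⁻¹ * G).PosSemidef := by
    have h := (Matrix.PosDef.fromBlocks₁₁ G Q hP).mp (by rwa [hG.eq])
    rwa [hG.eq] at h
  have hR : (mrpow P (-(1/2))).PosDef := mrpow_posDef hP _
  have hRR : mrpow P (-(1/2)) * mrpow P (-(1/2)) = P⁻¹ := by
    rw [mrpow_mul hP, show -(1/2:ℝ) + -(1/2) = -1 by ring, ← mrpow_inv hP 1, mrpow_one hP.1]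
  have hM : (mrpow P (-(1/2)) * Q * mrpow P (-(1/2))).PosDef := inner_posDef hP hQ
  have hH : (mrpow P (-(1/2)) * G * mrpow P (-(1/2))).IsHermitian := herm_conj hR.1 hG
  have hMH : ((mrpow P (-(1/2)) * Q * mrpow P (-(1/2)))
      - (mrpow P (-(1/2)) * G * mrpow P (-(1/2)))
        * (mrpow P (-(1/2)) * G * mrpow P (-(1/2)))).PosSemidef := by
    have h2 := hschur.mul_mul_conjTranspose_same (mrpow P (-(1/2)))
    rw [hR.1.eq] at h2
    have h3 : mrpow P (-(1/2)) * (Q - G * P⁻¹ * G) * mrpow P (-(1/2))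
        = (mrpow P (-(1/2)) * Q * mrpow P (-(1/2)))
          - (mrpow P (-(1/2)) * G * mrpow P (-(1/2)))
            * (mrpow P (-(1/2)) * G * mrpow P (-(1/2))) := by
      rw [← hRR]; noncomm_ring
    rwa [h3] at h2
  have hdom := sqrt_dominates hM hH hMH
  have hfin := hdom.mul_mul_conjTranspose_same (mrpow P (1/2))
  rw [(mrpow_posDef hP (1/2)).1.eq] at hfin
  have h4 : mrpow P (1/2) * (mrpow (mrpow P (-(1/2)) * Q * mrpow P (-(1/2))) (1/2)
      - mrpow P (-(1/2)) * G * mrpow P (-(1/2))) * mrpow P (1/2)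
      = wgmean P Q (1/2) - G := by
    rw [Matrix.mul_sub, Matrix.sub_mul]
    have e1 : mrpow P (1/2) * (mrpow P (-(1/2)) * G * mrpow P (-(1/2))) * mrpow P (1/2)
        = G := by
      rw [show mrpow P (1/2) * (mrpow P (-(1/2)) * G * mrpow P (-(1/2))) * mrpow P (1/2)
        = (mrpow P (1/2) * mrpow P (-(1/2))) * G * (mrpow P (-(1/2)) * mrpow P (1/2))
        from by noncomm_ring, XR_one hP, RX_one hP, one_mul, mul_one]
    rw [e1]
    rfl
  rwa [h4] at hfin

end Helpers

theorem callebaut_matrix_lower {l : Type*} [Fintype l] [DecidableEq l] (m : ℕ)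
    (A B : Fin m → Matrix l l ℂ) (hA : ∀ j, (A j).PosDef) (hB : ∀ j, (B j).PosDef)
    (s : ℝ) (hs0 : 0 ≤ s) (hs1 : s ≤ 1) :
    loewnerLE (∑ j, wgmean (A j) (B j) (1/2))
      (wgmean (∑ j, wgmean (A j) (B j) s) (∑ j, wgmean (A j) (B j) (1 - s)) (1/2)) := by
  unfold loewnerLE
  by_cases hm : m = 0
  · subst hm
    simp only [Finset.univ_eq_empty, Finset.sum_empty, sub_zero]
    have h0 : (0 : Matrix l l ℂ).PosSemidef := Matrix.PosSemidef.zero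
    have hX : (mrpow (0 : Matrix l l ℂ) (1/2)).PosSemidef := mrpow_posSemidef h0 _
    have hw : wgmean (0 : Matrix l l ℂ) 0 (1/2)
        = mrpow (0 : Matrix l l ℂ) (1/2) * mrpow (0 : Matrix l l ℂ) (1/2)
          * mrpow (0 : Matrix l l ℂ) (1/2) := by
      rw [show wgmean (0 : Matrix l l ℂ) 0 (1/2) = mrpow (0 : Matrix l l ℂ) (1/2)
        * mrpow (mrpow (0 : Matrix l l ℂ) (-(1/2)) * 0 * mrpow (0 : Matrix l l ℂ) (-(1/2))) (1/2)
        * mrpow (0 : Matrix l l ℂ) (1/2) from rfl, Matrix.mul_zero, Matrix.zero_mul]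
    rw [hw]
    have := hX.mul_mul_conjTranspose_same (mrpow (0 : Matrix l l ℂ) (1/2))
    rwa [hX.1.eq] at this
  · obtain ⟨k, rfl⟩ : ∃ k, m = k + 1 :=
      ⟨m - 1, (Nat.succ_pred_eq_of_pos (Nat.pos_of_ne_zero hm)).symm⟩
    have hPsum : (∑ j, wgmean (A j) (B j) s).PosDef := by
      rw [Fin.sum_univ_succ]
      exact (wgmean_posDef (hA 0) (hB 0) s).add_posSemidef
        (posSemidef_sum _ fun j => (wgmean_posDef (hA j.succ) (hB j.succ) s).posSemidef)
    have hQsum : (∑ j, wgmean (A j) (B j) (1 - s)).PosDef := by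
      rw [Fin.sum_univ_succ]
      exact (wgmean_posDef (hA 0) (hB 0) (1 - s)).add_posSemidef
        (posSemidef_sum _ fun j => (wgmean_posDef (hA j.succ) (hB j.succ) (1 - s)).posSemidef)
    have hGsum : (∑ j, wgmean (A j) (B j) (1/2)).IsHermitian :=
      (posSemidef_sum _ fun j => (wgmean_posDef (hA j) (hB j) (1/2)).posSemidef).1
    have hblock : (fromBlocks (∑ j, wgmean (A j) (B j) s) (∑ j, wgmean (A j) (B j) (1/2))
        (∑ j, wgmean (A j) (B j) (1/2)) (∑ j, wgmean (A j) (B j) (1 - s))).PosSemidef := by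
      rw [← sum_fromBlocks]
      exact posSemidef_sum _ fun j => blocks_psd_j (hA j) (hB j) s
    exact key_step hPsum hQsum hGsum hblock
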